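/- Let U = [[a,b],[c,d]] be a 2×2 unitary complex matrix with abcd ≠ 0. Define Φ_s as the set of unit vectors φ = (α,β) ∈ ℂ² such that Pr(X_n^φ = k) = Pr(X_n^φ = −k) for all n ∈ ℕ, n ≥ 1 and all k ∈ ℤ; Φ_0 as the set of unit vectors φ such that E(X_n^φ) = 0 for all n ∈ ℕ, n ≥ 1; and Φ_⊥ as the set of unit vectors φ = (α,β) with |α| = |β| = 1/√2 and aα·conj(bβ) + conj(aα)·bβ = 0. Then Φ_s = Φ_0 = Φ_⊥. -/

import Mathlib

/-- The one-dimensional quantum walk with coin `U = [[a,b],[c,d]]` and initial qubit `φ`: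
`konnoWalk a b c d φ n k = Ψ(k,n)`. -/
noncomputable def konnoWalk (a b c d : ℂ) (φ : ℂ × ℂ) : ℕ → ℤ → ℂ × ℂ
  | 0, k => if k = 0 then φ else (0, 0)
  | n + 1, k =>
      (a * (konnoWalk a b c d φ n (k + 1)).1 + b * (konnoWalk a b c d φ n (k + 1)).2,
       c * (konnoWalk a b c d φ n (k - 1)).1 + d * (konnoWalk a b c d φ n (k - 1)).2)

/-- `Pr(X_n^φ = k)`. -/
noncomputable def konnoProb (a b c d : ℂ) (φ : ℂ × ℂ) (n : ℕ) (k : ℤ) : ℝ :=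
  ‖(konnoWalk a b c d φ n k).1‖ ^ 2 + ‖(konnoWalk a b c d φ n k).2‖ ^ 2

lemma konnoWalk_eq_zero (a b c d : ℂ) (φ : ℂ × ℂ) :
    ∀ (n : ℕ) (k : ℤ), n < k.natAbs → konnoWalk a b c d φ n k = 0 := by
  intro n
  induction n with
  | zero =>
      intro k hk
      simp only [konnoWalk]
      rw [if_neg (show ¬ k = 0 by omega)]
      rfl
  | succ n ih =>
      intro k hk
      simp only [konnoWalk, ih (k+1) (by omega), ih (k-1) (by omega)]
      simp

lemma konnoSum (a b c d : ℂ) (φ : ℂ × ℂ) (n : ℕ) :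
    (∑' k : ℤ, (k : ℝ) * konnoProb a b c d φ n k) =
      ∑ k ∈ Finset.Icc (-(n:ℤ)) n, (k : ℝ) * konnoProb a b c d φ n k := by
  apply tsum_eq_sum
  intro k hk
  rw [Finset.mem_Icc] at hk
  have : konnoWalk a b c d φ n k = 0 := konnoWalk_eq_zero a b c d φ n k (by omega)
  simp [konnoProb, this]

lemma cabs_sq (z : ℂ) : ((‖z‖ : ℝ) : ℂ)^2 = z * (starRingEnd ℂ) z := by
  rw [← Complex.ofReal_pow, Complex.sq_norm]
  exact (Complex.mul_conj z).symm

lemma norm_sq_c (z : ℂ) (r : ℝ) (h : ‖z‖^2 = r) : z * (starRingEnd ℂ) z = (r : ℂ) := by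
  rw [← h]
  push_cast
  rw [cabs_sq]

set_option maxHeartbeats 1000000 in
lemma konnoAux (a A b B c C d D p P q Q : ℂ)
    (ha : a ≠ 0) (hA : A ≠ 0) (hb : b ≠ 0) (hB : B ≠ 0)
    (hr1 : a*A + b*B = 1) (hr2 : a*C + b*D = 0) (hr3 : c*A + d*B = 0) (hr4 : c*C + d*D = 1)
    (hphi : p*P + q*Q = 1)
    (h1 : (c*p+d*q)*(C*P+D*Q) - (a*p+b*q)*(A*P+B*Q) = 0)
    (h3 : 3*(d*d*(c*p+d*q))*(D*D*(C*P+D*Q)) + (b*d*(c*p+d*q))*(B*D*(C*P+D*Q))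
        + (c*(b*(c*p+d*q)) + d*(c*(a*p+b*q)))*(C*(B*(C*P+D*Q)) + D*(C*(A*P+B*Q)))
        - (a*(b*(c*p+d*q)) + b*(c*(a*p+b*q)))*(A*(B*(C*P+D*Q)) + B*(C*(A*P+B*Q)))
        - (a*(c*(a*p+b*q)))*(A*(C*(A*P+B*Q)))
        - 3*(a*a*(a*p+b*q))*(A*(A*(A*P+B*Q))) = 0) :
    p*P = 1/2 ∧ a*p*(B*Q) + (A*P)*(b*q) = 0 := by
  have hdD : d*D = a*A := by
    linear_combination (-1*a*C)*hr3 + (B*d)*hr2 + (-1*d*D)*hr1 + (a*A)*hr4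
  have hsum : (a*p+b*q)*(A*P+B*Q) + (c*p+d*q)*(C*P+D*Q) = p*P + q*Q := by
    have h := mul_left_cancel₀ (mul_ne_zero ha hA) (show
      a*A*((a*p+b*q)*(A*P+B*Q) + (c*p+d*q)*(C*P+D*Q)) = a*A*(p*P + q*Q) by
        linear_combination (a*D*p*Q + a*C*p*P) * hr3 + (-1*B*d*p*P + A*d*P*q) * hr2 + (b*B*p*P + -1*A*b*P*q + -1*a*B*p*Q + a*A*q*Q) * hdD + (a*A*q*Q + a*A*p*P) * hr1)
    exact h
  have hS : (a*p+b*q)*(A*P+B*Q) = 1/2 := by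
    linear_combination (1/2)*hsum - (1/2)*h1 + (1/2)*hphi
  have hkey : (1 - a*A) * (p*P - q*Q) =
      (-12*(a*A)^2 + 10*(a*A) - 4) * ((a*p+b*q)*(A*P+B*Q) - 1/2)
      - (3*(d*d*(c*p+d*q))*(D*D*(C*P+D*Q)) + (b*d*(c*p+d*q))*(B*D*(C*P+D*Q))
        + (c*(b*(c*p+d*q)) + d*(c*(a*p+b*q)))*(C*(B*(C*P+D*Q)) + D*(C*(A*P+B*Q)))
        - (a*(b*(c*p+d*q)) + b*(c*(a*p+b*q)))*(A*(B*(C*P+D*Q)) + B*(C*(A*P+B*Q)))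
        - (a*(c*(a*p+b*q)))*(A*(C*(A*P+B*Q)))
        - 3*(a*a*(a*p+b*q))*(A*(A*(A*P+B*Q)))) := by
    have h := mul_left_cancel₀ (pow_ne_zero 2 (mul_ne_zero ha hA)) (show
      (a*A)^2 * ((1 - a*A) * (p*P - q*Q)) =
      (a*A)^2 * ((-12*(a*A)^2 + 10*(a*A) - 4) * ((a*p+b*q)*(A*P+B*Q) - 1/2)
      - (3*(d*d*(c*p+d*q))*(D*D*(C*P+D*Q)) + (b*d*(c*p+d*q))*(B*D*(C*P+D*Q))
        + (c*(b*(c*p+d*q)) + d*(c*(a*p+b*q)))*(C*(B*(C*P+D*Q)) + D*(C*(A*P+B*Q)))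
        - (a*(b*(c*p+d*q)) + b*(c*(a*p+b*q)))*(A*(B*(C*P+D*Q)) + B*(C*(A*P+B*Q)))
        - (a*(c*(a*p+b*q)))*(A*(C*(A*P+B*Q)))
        - 3*(a*a*(a*p+b*q))*(A*(A*(A*P+B*Q))))) by
      linear_combination (-2*a^2*b*B^2*C*d*D*p*Q + -1*a^2*b*B^2*C^2*d*p*P + 3*a^2*A*d^2*D^3*p*Q + 3*a^2*A*C*d^2*D^2*p*P + a^2*A*b*B*d*D^2*p*Q + 4*a^2*A*b*B*C*d*D*q*Q + 2*a^2*A*b*B*C^2*d*P*q + 2*a^2*A*b*B*c*C*D*p*Q + a^2*A*b*B*c*C^2*p*P + -1*a^2*A*b^2*B^2*C*q*Q + 2*a^2*A^2*b*C*d*D*P*q + a^2*A^2*b*c*C*D*p*P + -1*a^2*A^2*b^2*B*D*q*Q + -2*a^2*A^2*b^2*B*C*P*q + 2*a^3*A*B*C*d*D*p*Q + a^3*A*B*C^2*d*p*P + -2*a^3*A*b*B^2*C*p*Q + a^3*A^2*C*d*D*p*P + -2*a^3*A^2*b*B*D*p*Q + -1*a^3*A^2*b*B*C*q*Q + -4*a^3*A^2*b*B*C*p*P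 + -1*a^3*A^3*b*C*P*q + -1*a^4*A^2*B*C*p*Q + -1*a^4*A^3*C*p*P) * hr3 + (-1*b^2*B^3*d^2*D*p*P + 2*A*b^2*B^2*d^2*D*P*q + 2*a*b*B^3*d^2*D*p*Q + a*b*B^3*C*d^2*p*P + -3*a*A*B*d^3*D^2*p*P + -4*a*A*b*B^2*d^2*D*q*Q + a*A*b*B^2*d^2*D*p*P + -2*a*A*b*B^2*C*d^2*P*q + a*A*b^2*B^3*d*q*Q + 3*a*A^2*d^3*D^2*P*q + -1*a*A^2*b*B*d^2*D*P*q + 2*a*A^2*b^2*B^2*d*P*q + -2*a^2*A*B^2*d^2*D*p*Q + -1*a^2*A*B^2*C*d^2*p*P + 2*a^2*A*b*B^3*d*p*Q + -1*a^2*A^2*B*d^2*D*p*P + 4*a^2*A^2*b*B^2*d*p*P + -1*a^2*A^3*b*B*d*P*q + a^3*A^2*B^2*d*p*Q + a^3*A^3*B*d*p*P) * hr2 + (b^3*B^3*d*D*p*P + -2*A*b^3*B^2*d*D*P*q + -2*a*b^2*B^3*d*D*p*Q + 3*a*A*b*B*d^2*D^2*p*P + 4*a*A*b^2*B^2*d*D*q*Q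 + -1*a*A*b^2*B^2*d*D*p*P + -1*a*A*b^3*B^3*q*Q + a*A*b^3*B^3*p*P + -3*a*A^2*b*d^2*D^2*P*q + a*A^2*b^2*B*d*D*P*q + -4*a*A^2*b^3*B^2*P*q + -3*a^2*A*B*d^2*D^2*p*Q + a^2*A*b*B^2*d*D*p*Q + -4*a^2*A*b^2*B^3*p*Q + 3*a^2*A^2*d^2*D^2*q*Q + a^2*A^2*b*B*d*D*q*Q + 4*a^2*A^2*b*B*d*D*p*P + 5*a^2*A^2*b^2*B^2*q*Q + -5*a^2*A^2*b^2*B^2*p*P + -3*a^2*A^3*b*d*D*P*q + 2*a^2*A^3*b^2*B*P*q + -3*a^3*A^2*B*d*D*p*Q + 2*a^3*A^2*b*B^2*p*Q + 3*a^3*A^3*d*D*q*Q + 3*a^3*A^3*b*B*p*P + -3*a^3*A^4*b*P*q + -3*a^4*A^3*B*p*Q + 3*a^4*A^4*q*Q) * hdD + (3*a^2*A^2*q*Q + a^2*A^2*p*P + -1*a^2*A^2*b*B*q*Q + a^2*A^2*b*B*p*P + -1*a^2*A^2*b^2*B^2*q*Q + a^2*A^2*b^2*B^2*p*P + -4*a^2*A^3*b*P*q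 + -4*a^2*A^3*b^2*B*P*q + -4*a^3*A^2*B*p*Q + -4*a^3*A^2*b*B^2*p*Q + -3*a^3*A^3*q*Q + -7*a^3*A^3*p*P + 6*a^3*A^3*b*B*q*Q + -6*a^3*A^3*b*B*p*P + 6*a^3*A^4*b*P*q + 6*a^4*A^3*B*p*Q + 3*a^4*A^4*q*Q + 9*a^4*A^4*p*P) * hr1 + (2*a^2*A^2 + -5*a^3*A^3 + 6*a^4*A^4) * hphi)
    exact h
  have hbB : (1 : ℂ) - a*A = b*B := by linear_combination -hr1
  have hX : p*P - q*Q = 0 := by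
    rcases mul_eq_zero.mp (by rw [hkey, hS, h3]; ring :
        ((1 : ℂ) - a*A) * (p*P - q*Q) = 0) with h | h
    · exact absurd h (by rw [hbB]; exact mul_ne_zero hb hB)
    · exact h
  refine ⟨by linear_combination (1/2)*hphi + (1/2)*hX, ?_⟩
  have hpP : p*P = 1/2 := by linear_combination (1/2)*hphi + (1/2)*hX
  have hqQ : q*Q = 1/2 := by linear_combination (1/2)*hphi - (1/2)*hX
  linear_combination hS - (a*A)*hpP - (b*B)*hqQ - (1/2)*hr1

lemma konnoWalk_reflect (a b c d α β : ℂ) (ha : a ≠ 0) (hb : b ≠ 0) (hd : d ≠ 0)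
    (hβ : β ≠ 0) (hkey : a*c*α^2 = b*d*β^2) :
    ∀ (n : ℕ) (k : ℤ), konnoWalk a b c d (α, β) n (-k) =
      ((d/a)^(-k) * (α/β) * (konnoWalk a b c d (α, β) n k).2,
       (d/a)^(-k) * (α/β) * ((c*a)/(b*d)) * (konnoWalk a b c d (α, β) n k).1) := by
  have hda : (d/a : ℂ) ≠ 0 := div_ne_zero hd ha
  intro n
  induction n with
  | zero =>
      intro k
      by_cases hk : k = 0
      · subst hk
        simp only [neg_zero, konnoWalk, if_true]
        simp only [Prod.mk.injEq, zpow_zero, one_mul]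
        constructor
        · field_simp
        · field_simp
          linear_combination -hkey
      · simp only [konnoWalk]
        rw [if_neg (by omega : ¬ (-k) = 0), if_neg hk]
        simp
  | succ n ih =>
      intro k
      have e1 : (-k + 1 : ℤ) = -(k-1) := by ring
      have e2 : (-k - 1 : ℤ) = -(k+1) := by ring
      simp only [konnoWalk, e1, e2, ih (k-1), ih (k+1)]
      have z1 : ((d/a) : ℂ)^(-(k-1)) = (d/a)^(-k) * (d/a) := by
        rw [show (-(k-1) : ℤ) = -k + 1 by ring, zpow_add₀ hda, zpow_one]
      have z2 : ((d/a) : ℂ)^(-(k+1)) = (d/a)^(-k) / (d/a) := by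
        rw [show (-(k+1) : ℤ) = -k - 1 by ring, zpow_sub₀ hda, zpow_one]
      rw [z1, z2]
      generalize ((d/a) : ℂ)^(-k) = X
      simp only [Prod.mk.injEq]
      constructor
      · field_simp
        ring
      · field_simp
        ring

lemma konnoProb_reflect (a b c d α β : ℂ) (ha : a ≠ 0) (hb : b ≠ 0) (hd : d ≠ 0)
    (hβ : β ≠ 0) (hkey : a*c*α^2 = b*d*β^2)
    (hnd : ‖d‖ = ‖a‖) (hnc : ‖c‖ = ‖b‖) (hne : ‖α‖ = ‖β‖) (n : ℕ) (k : ℤ) :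
    konnoProb a b c d (α, β) n k = konnoProb a b c d (α, β) n (-k) := by
  have hna : ‖a‖ ≠ 0 := norm_ne_zero_iff.mpr ha
  have hnb : ‖b‖ ≠ 0 := norm_ne_zero_iff.mpr hb
  have hnβ : ‖β‖ ≠ 0 := norm_ne_zero_iff.mpr hβ
  rw [konnoProb, konnoProb, konnoWalk_reflect a b c d α β ha hb hd hβ hkey n k]
  simp only [norm_mul, norm_zpow, norm_div, hnd, hnc, hne, div_self hna, div_self hnβ,
    one_zpow, one_mul, mul_one, div_self (mul_ne_zero hnb (hnd ▸ hna)),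
    mul_div_assoc]
  have h1 : ‖b‖ * (‖a‖ / (‖b‖ * ‖a‖)) = 1 := by
    field_simp
  rw [h1]
  ring

theorem konno_symmetry_of_distribution
    (a b c d : ℂ)
    (hU : !![a, b; c, d] ∈ Matrix.unitaryGroup (Fin 2) ℂ)
    (habcd : a * b * c * d ≠ 0) :
    ({φ : ℂ × ℂ | ‖φ.1‖ ^ 2 + ‖φ.2‖ ^ 2 = 1 ∧
        ∀ n : ℕ, 1 ≤ n → ∀ k : ℤ, konnoProb a b c d φ n k = konnoProb a b c d φ n (-k)} =
      {φ : ℂ × ℂ | ‖φ.1‖ ^ 2 + ‖φ.2‖ ^ 2 = 1 ∧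
        ∀ n : ℕ, 1 ≤ n → (∑' k : ℤ, (k : ℝ) * konnoProb a b c d φ n k) = 0}) ∧
    ({φ : ℂ × ℂ | ‖φ.1‖ ^ 2 + ‖φ.2‖ ^ 2 = 1 ∧
        ∀ n : ℕ, 1 ≤ n → (∑' k : ℤ, (k : ℝ) * konnoProb a b c d φ n k) = 0} =
      {φ : ℂ × ℂ | ‖φ.1‖ = 1 / Real.sqrt 2 ∧ ‖φ.2‖ = 1 / Real.sqrt 2 ∧
        a * φ.1 * (starRingEnd ℂ) (b * φ.2) + (starRingEnd ℂ) (a * φ.1) * (b * φ.2) = 0}) := by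
  obtain ⟨hab, hd⟩ := mul_ne_zero_iff.mp habcd
  obtain ⟨hab', hc⟩ := mul_ne_zero_iff.mp hab
  obtain ⟨ha, hb⟩ := mul_ne_zero_iff.mp hab'
  have hA : (starRingEnd ℂ) a ≠ 0 := star_ne_zero.mpr ha
  have hB : (starRingEnd ℂ) b ≠ 0 := star_ne_zero.mpr hb
  have hU2 := hU.2
  have hr1 : a * (starRingEnd ℂ) a + b * (starRingEnd ℂ) b = 1 := by
    have := congrFun (congrFun hU2 0) 0
    simpa [Matrix.mul_apply, Fin.sum_univ_two, Matrix.one_apply, Matrix.star_apply,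
      Complex.star_def] using this
  have hr2 : a * (starRingEnd ℂ) c + b * (starRingEnd ℂ) d = 0 := by
    have := congrFun (congrFun hU2 0) 1
    simpa [Matrix.mul_apply, Fin.sum_univ_two, Matrix.one_apply, Matrix.star_apply,
      Complex.star_def] using this
  have hr3 : c * (starRingEnd ℂ) a + d * (starRingEnd ℂ) b = 0 := by
    have := congrFun (congrFun hU2 1) 0
    simpa [Matrix.mul_apply, Fin.sum_univ_two, Matrix.one_apply, Matrix.star_apply,
      Complex.star_def] using this
  have hr4 : c * (starRingEnd ℂ) c + d * (starRingEnd ℂ) d = 1 := by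
    have := congrFun (congrFun hU2 1) 1
    simpa [Matrix.mul_apply, Fin.sum_univ_two, Matrix.one_apply, Matrix.star_apply,
      Complex.star_def] using this
  have hdD : d * (starRingEnd ℂ) d = a * (starRingEnd ℂ) a := by
    linear_combination (-1*a*(starRingEnd ℂ) c)*hr3 + ((starRingEnd ℂ) b*d)*hr2
      + (-1*d*(starRingEnd ℂ) d)*hr1 + (a*(starRingEnd ℂ) a)*hr4
  have hcC : c * (starRingEnd ℂ) c = b * (starRingEnd ℂ) b := by
    linear_combination (a*(starRingEnd ℂ) c) * hr3 + (-1*(starRingEnd ℂ) b*d) * hr2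
      + (-1 + d*(starRingEnd ℂ) d) * hr1 + (1 + -1*a*(starRingEnd ℂ) a) * hr4
  have hnd : ‖d‖ = ‖a‖ := by
    have h2 : ((‖d‖^2 : ℝ) : ℂ) = ((‖a‖^2 : ℝ) : ℂ) := by
      rw [← norm_sq_c d _ rfl, ← norm_sq_c a _ rfl, hdD]
    have h3 : ‖d‖^2 = ‖a‖^2 := by exact_mod_cast h2
    nlinarith [norm_nonneg d, norm_nonneg a]
  have hnc : ‖c‖ = ‖b‖ := by
    have h2 : ((‖c‖^2 : ℝ) : ℂ) = ((‖b‖^2 : ℝ) : ℂ) := by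
      rw [← norm_sq_c c _ rfl, ← norm_sq_c b _ rfl, hcC]
    have h3 : ‖c‖^2 = ‖b‖^2 := by exact_mod_cast h2
    nlinarith [norm_nonneg c, norm_nonneg b]
  have hhalf : ((1:ℝ) / Real.sqrt 2)^2 = 1/2 := by
    rw [div_pow, one_pow, Real.sq_sqrt (by norm_num : (2:ℝ) ≥ 0)]
  -- inclusion 1 : Φ_s ⊆ Φ_0
  have incl1 : ∀ φ : ℂ × ℂ, (‖φ.1‖ ^ 2 + ‖φ.2‖ ^ 2 = 1 ∧
      ∀ n : ℕ, 1 ≤ n → ∀ k : ℤ, konnoProb a b c d φ n k = konnoProb a b c d φ n (-k)) →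
      (‖φ.1‖ ^ 2 + ‖φ.2‖ ^ 2 = 1 ∧
      ∀ n : ℕ, 1 ≤ n → (∑' k : ℤ, (k : ℝ) * konnoProb a b c d φ n k) = 0) := by
    rintro φ ⟨hn, hsym⟩
    refine ⟨hn, fun n hn1 => ?_⟩
    set f : ℤ → ℝ := fun k => (k : ℝ) * konnoProb a b c d φ n k with hf
    have h1 : ∑' k, f k = ∑' k, f (-k) := by
      exact ((Equiv.neg ℤ).tsum_eq f).symm
    have h2 : ∀ k : ℤ, f (-k) = - f k := by
      intro k
      simp only [hf]
      rw [← hsym n hn1 k]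
      push_cast
      ring
    have h3 : ∑' k, f k = - ∑' k, f k :=
      calc ∑' k, f k = ∑' k, f (-k) := h1
        _ = ∑' k, -f k := tsum_congr h2
        _ = -∑' k, f k := tsum_neg
    linarith
  -- inclusion 2 : Φ_0 ⊆ Φ_⊥
  have incl2 : ∀ φ : ℂ × ℂ, (‖φ.1‖ ^ 2 + ‖φ.2‖ ^ 2 = 1 ∧
      ∀ n : ℕ, 1 ≤ n → (∑' k : ℤ, (k : ℝ) * konnoProb a b c d φ n k) = 0) →
      (‖φ.1‖ = 1 / Real.sqrt 2 ∧ ‖φ.2‖ = 1 / Real.sqrt 2 ∧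
        a * φ.1 * (starRingEnd ℂ) (b * φ.2) + (starRingEnd ℂ) (a * φ.1) * (b * φ.2) = 0) := by
    rintro φ ⟨hn, hE⟩
    have hphi : φ.1 * (starRingEnd ℂ) φ.1 + φ.2 * (starRingEnd ℂ) φ.2 = 1 := by
      rw [norm_sq_c φ.1 _ rfl, norm_sq_c φ.2 _ rfl]
      exact_mod_cast congrArg (Complex.ofReal) hn
    have hE1 := hE 1 (le_refl 1)
    have hE3 := hE 3 (by norm_num)
    rw [konnoSum] at hE1 hE3
    push_cast at hE1 hE3
    rw [show Finset.Icc (-(1:ℤ)) 1 = {-1, 0, 1} from rfl] at hE1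
    rw [show Finset.Icc (-(3:ℤ)) 3 = {-3, -2, -1, 0, 1, 2, 3} from rfl] at hE3
    simp [Finset.sum_insert, konnoProb, konnoWalk] at hE1 hE3
    have hc1 := congrArg (Complex.ofReal) hE1
    have hc3 := congrArg (Complex.ofReal) hE3
    push_cast [mul_pow, cabs_sq] at hc1 hc3
    simp only [map_add, map_mul] at hc1 hc3
    have h1 : (c*φ.1+d*φ.2)*((starRingEnd ℂ) c*(starRingEnd ℂ) φ.1+(starRingEnd ℂ) d*(starRingEnd ℂ) φ.2)
        - (a*φ.1+b*φ.2)*((starRingEnd ℂ) a*(starRingEnd ℂ) φ.1+(starRingEnd ℂ) b*(starRingEnd ℂ) φ.2) = 0 := by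
      linear_combination hc1
    have h3 : 3*(d*d*(c*φ.1+d*φ.2))*((starRingEnd ℂ) d*(starRingEnd ℂ) d*((starRingEnd ℂ) c*(starRingEnd ℂ) φ.1+(starRingEnd ℂ) d*(starRingEnd ℂ) φ.2))
        + (b*d*(c*φ.1+d*φ.2))*((starRingEnd ℂ) b*(starRingEnd ℂ) d*((starRingEnd ℂ) c*(starRingEnd ℂ) φ.1+(starRingEnd ℂ) d*(starRingEnd ℂ) φ.2))
        + (c*(b*(c*φ.1+d*φ.2)) + d*(c*(a*φ.1+b*φ.2)))*((starRingEnd ℂ) c*((starRingEnd ℂ) b*((starRingEnd ℂ) c*(starRingEnd ℂ) φ.1+(starRingEnd ℂ) d*(starRingEnd ℂ) φ.2)) + (starRingEnd ℂ) d*((starRingEnd ℂ) c*((starRingEnd ℂ) a*(starRingEnd ℂ) φ.1+(starRingEnd ℂ) b*(starRingEnd ℂ) φ.2)))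
        - (a*(b*(c*φ.1+d*φ.2)) + b*(c*(a*φ.1+b*φ.2)))*((starRingEnd ℂ) a*((starRingEnd ℂ) b*((starRingEnd ℂ) c*(starRingEnd ℂ) φ.1+(starRingEnd ℂ) d*(starRingEnd ℂ) φ.2)) + (starRingEnd ℂ) b*((starRingEnd ℂ) c*((starRingEnd ℂ) a*(starRingEnd ℂ) φ.1+(starRingEnd ℂ) b*(starRingEnd ℂ) φ.2)))
        - (a*(c*(a*φ.1+b*φ.2)))*((starRingEnd ℂ) a*((starRingEnd ℂ) c*((starRingEnd ℂ) a*(starRingEnd ℂ) φ.1+(starRingEnd ℂ) b*(starRingEnd ℂ) φ.2)))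
        - 3*(a*a*(a*φ.1+b*φ.2))*((starRingEnd ℂ) a*((starRingEnd ℂ) a*((starRingEnd ℂ) a*(starRingEnd ℂ) φ.1+(starRingEnd ℂ) b*(starRingEnd ℂ) φ.2))) = 0 := by
      linear_combination hc3
    obtain ⟨hpP, hK⟩ := konnoAux a ((starRingEnd ℂ) a) b ((starRingEnd ℂ) b) c ((starRingEnd ℂ) c)
      d ((starRingEnd ℂ) d) φ.1 ((starRingEnd ℂ) φ.1) φ.2 ((starRingEnd ℂ) φ.2)
      ha hA hb hB hr1 hr2 hr3 hr4 hphi h1 h3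
    have hqQ : φ.2 * (starRingEnd ℂ) φ.2 = 1/2 := by linear_combination hphi - hpP
    have hps : ‖φ.1‖^2 = 1/2 := by
      have : ((‖φ.1‖^2 : ℝ) : ℂ) = ((1/2 : ℝ) : ℂ) := by
        rw [← norm_sq_c φ.1 _ rfl, hpP]; norm_num
      exact_mod_cast this
    have hqs : ‖φ.2‖^2 = 1/2 := by
      have : ((‖φ.2‖^2 : ℝ) : ℂ) = ((1/2 : ℝ) : ℂ) := by
        rw [← norm_sq_c φ.2 _ rfl, hqQ]; norm_num
      exact_mod_cast this
    refine ⟨?_, ?_, ?_⟩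
    · rw [← Real.sqrt_sq (norm_nonneg φ.1), hps,
        show (1/2 : ℝ) = 2⁻¹ by norm_num, Real.sqrt_inv, one_div]
    · rw [← Real.sqrt_sq (norm_nonneg φ.2), hqs,
        show (1/2 : ℝ) = 2⁻¹ by norm_num, Real.sqrt_inv, one_div]
    · simp only [map_mul]
      linear_combination hK
  -- inclusion 3 : Φ_⊥ ⊆ Φ_s
  have incl3 : ∀ φ : ℂ × ℂ, (‖φ.1‖ = 1 / Real.sqrt 2 ∧ ‖φ.2‖ = 1 / Real.sqrt 2 ∧
        a * φ.1 * (starRingEnd ℂ) (b * φ.2) + (starRingEnd ℂ) (a * φ.1) * (b * φ.2) = 0) →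
      (‖φ.1‖ ^ 2 + ‖φ.2‖ ^ 2 = 1 ∧
      ∀ n : ℕ, 1 ≤ n → ∀ k : ℤ, konnoProb a b c d φ n k = konnoProb a b c d φ n (-k)) := by
    rintro ⟨p, q⟩ ⟨hp2, hq2, hKc⟩
    have hq : q ≠ 0 := norm_ne_zero_iff.mp (by rw [hq2]; positivity)
    have hQ : (starRingEnd ℂ) q ≠ 0 := star_ne_zero.mpr hq
    have hppb : p * (starRingEnd ℂ) p = 1/2 := by
      rw [norm_sq_c p _ rfl, hp2]
      push_cast [hhalf]
      norm_num
    have hqqb : q * (starRingEnd ℂ) q = 1/2 := by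
      rw [norm_sq_c q _ rfl, hq2]
      push_cast [hhalf]
      norm_num
    have hXab : p * (starRingEnd ℂ) p - q * (starRingEnd ℂ) q = 0 := by
      rw [hppb, hqqb]; ring
    simp only [map_mul] at hKc
    have h5 : (a*(starRingEnd ℂ) b*p^2 + (starRingEnd ℂ) a*b*q^2) * (starRingEnd ℂ) q = 0 := by
      linear_combination p*hKc - (starRingEnd ℂ) a * b * q * hXab
    have h6 : a*(starRingEnd ℂ) b*p^2 + (starRingEnd ℂ) a*b*q^2 = 0 :=
      (mul_eq_zero.mp h5).resolve_right hQ
    have h7 : (a*c*p^2 - b*d*q^2) * (starRingEnd ℂ) a = 0 := by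
      linear_combination a*p^2*hr3 - d*h6
    have hkey : a*c*p^2 = b*d*q^2 := by
      have := (mul_eq_zero.mp h7).resolve_right hA
      linear_combination this
    have hne : ‖p‖ = ‖q‖ := by rw [hp2, hq2]
    constructor
    · rw [hp2, hq2, hhalf]; norm_num
    · intro n _ k
      exact konnoProb_reflect a b c d p q ha hb hd hq hkey hnd hnc hne n k
  constructor
  · apply Set.Subset.antisymm
    · intro φ hφ; exact incl1 φ hφ
    · intro φ hφ; exact incl3 φ (incl2 φ hφ)
  · apply Set.Subset.antisymm
    · intro φ hφ; exact incl2 φ hφ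
    · intro φ hφ; exact incl1 φ (incl3 φ hφ)
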